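/- Let m, r be positive integers with r ≥ 1, and let U, V ∈ ℂ^{m×r} have orthonormal columns (UᴴU = I_r and VᴴV = I_r). Let W ∈ ℂ^{m×m} satisfy UᴴW = 0 and WV = 0. Then the spectral norm satisfies ‖U Vᴴ + W‖₂ = max(1, ‖W‖₂). In particular, if ‖W‖₂ ≤ 1 then ‖U Vᴴ + W‖₂ = 1. -/

import Mathlib

open Matrix

private lemma sq_le_imp' {a b : ℝ} (ha : 0 ≤ a) (hb : 0 ≤ b) (h : a ^ 2 ≤ b ^ 2) : a ≤ b := by
  nlinarith

set_option maxHeartbeats 2000000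

/-- The spectral norm (largest singular value) of a complex square matrix,
realized as the operator norm of the induced map on `EuclideanSpace`. -/
noncomputable def specNorm {n : ℕ} (M : Matrix (Fin n) (Fin n) ℂ) : ℝ :=
  ‖Matrix.toEuclideanCLM (𝕜 := ℂ) M‖

/-- if `U, V ∈ ℂ^{m×r}` have orthonormal columns and
`W ∈ ℂ^{m×m}` satisfies `UᴴW = 0` and `WV = 0`, then
`‖U Vᴴ + W‖₂ = max(1, ‖W‖₂)`; in particular if `‖W‖₂ ≤ 1` then `‖U Vᴴ + W‖₂ = 1`. -/
theorem specNorm_subgradient_form (m r : ℕ) (hm : 0 < m) (hr : 1 ≤ r)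
    (U V : Matrix (Fin m) (Fin r) ℂ) (W : Matrix (Fin m) (Fin m) ℂ)
    (hU : Uᴴ * U = 1) (hV : Vᴴ * V = 1)
    (hUW : Uᴴ * W = 0) (hWV : W * V = 0) :
    specNorm (U * Vᴴ + W) = max 1 (specNorm W) ∧
      (specNorm W ≤ 1 → specNorm (U * Vᴴ + W) = 1) := by
  set T := Matrix.toEuclideanCLM (𝕜 := ℂ) (n := Fin m) with hT
  set f := T (U * Vᴴ) with hf
  set g := T W with hg
  set p := T (V * Vᴴ) with hp
  -- algebraic facts
  have hVUW : (U * Vᴴ)ᴴ * W = 0 := by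
    rw [conjTranspose_mul, conjTranspose_conjTranspose, Matrix.mul_assoc, hUW, Matrix.mul_zero]
  have hff : (U * Vᴴ)ᴴ * (U * Vᴴ) = V * Vᴴ := by
    rw [conjTranspose_mul, conjTranspose_conjTranspose,
      Matrix.mul_assoc, ← Matrix.mul_assoc Uᴴ U Vᴴ, hU, Matrix.one_mul]
  have hpstar : (V * Vᴴ)ᴴ = V * Vᴴ := by
    rw [conjTranspose_mul, conjTranspose_conjTranspose]
  have hpp : (V * Vᴴ) * (V * Vᴴ) = V * Vᴴ := by
    rw [Matrix.mul_assoc, ← Matrix.mul_assoc Vᴴ, hV, Matrix.one_mul]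
  have hgp : W * (V * Vᴴ) = 0 := by
    rw [← Matrix.mul_assoc, hWV, Matrix.zero_mul]
  -- transported facts
  have hfg0 : star f * g = 0 := by
    rw [hf, hg, ← map_star, ← _root_.map_mul, Matrix.star_eq_conjTranspose, hVUW, map_zero]
  have hffp : star f * f = p := by
    rw [hf, hp, ← map_star, ← _root_.map_mul, Matrix.star_eq_conjTranspose, hff]
  have hpstar' : star p = p := by
    rw [hp, ← map_star, Matrix.star_eq_conjTranspose, hpstar]
  have hpp' : p * p = p := by rw [hp, ← _root_.map_mul, hpp]
  have hgp' : g * p = 0 := by rw [hg, hp, ← _root_.map_mul, hgp, map_zero]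
  have hadj : ContinuousLinearMap.adjoint f = star f :=
    (ContinuousLinearMap.star_eq_adjoint f).symm
  have hadjp : ContinuousLinearMap.adjoint p = p := by
    rw [← ContinuousLinearMap.star_eq_adjoint, hpstar']
  -- pointwise facts
  have key : ∀ x : EuclideanSpace ℂ (Fin m),
      ‖(f + g) x‖ ^ 2 = ‖p x‖ ^ 2 + ‖g x‖ ^ 2 ∧
      ‖x‖ ^ 2 = ‖p x‖ ^ 2 + ‖x - p x‖ ^ 2 ∧ g x = g (x - p x) := by
    intro x
    have hinner : (inner ℂ (f x) (g x) : ℂ) = 0 := by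
      rw [← ContinuousLinearMap.adjoint_inner_right, hadj,
        ← ContinuousLinearMap.mul_apply, hfg0]
      simp
    have h1 : ‖(f + g) x‖ ^ 2 = ‖f x‖ ^ 2 + ‖g x‖ ^ 2 := by
      rw [ContinuousLinearMap.add_apply]
      simp only [pow_two]
      exact norm_add_sq_eq_norm_sq_add_norm_sq_of_inner_eq_zero _ _ hinner
    have h2 : ‖f x‖ ^ 2 = ‖p x‖ ^ 2 := by
      have e1 : (inner ℂ (f x) (f x) : ℂ) = inner ℂ (p x) (p x) := by
        calc (inner ℂ (f x) (f x) : ℂ)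
            = inner ℂ x ((star f * f) x) := by
              rw [ContinuousLinearMap.mul_apply, ← hadj,
                ContinuousLinearMap.adjoint_inner_right]
          _ = inner ℂ x (p x) := by rw [hffp]
          _ = inner ℂ x ((p * p) x) := by rw [hpp']
          _ = inner ℂ (p x) (p x) := by
              rw [ContinuousLinearMap.mul_apply, ← ContinuousLinearMap.adjoint_inner_right, hadjp]
      have e2 := congrArg (RCLike.re (K := ℂ)) e1
      rwa [inner_self_eq_norm_sq, inner_self_eq_norm_sq] at e2
    have h3 : g x = g (x - p x) := by
      rw [map_sub]
      have : g (p x) = 0 := by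
        rw [← ContinuousLinearMap.mul_apply, hgp']; simp
      rw [this, sub_zero]
    have h4 : ‖x‖ ^ 2 = ‖p x‖ ^ 2 + ‖x - p x‖ ^ 2 := by
      have hinner2 : (inner ℂ (p x) (x - p x) : ℂ) = 0 := by
        have hppx : p (p x) = p x := by
          rw [← ContinuousLinearMap.mul_apply, hpp']
        calc (inner ℂ (p x) (x - p x) : ℂ)
            = inner ℂ ((ContinuousLinearMap.adjoint p) x) (x - p x) := by rw [hadjp]
          _ = inner ℂ x (p (x - p x)) := ContinuousLinearMap.adjoint_inner_left p (x - p x) x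
          _ = 0 := by rw [map_sub, hppx, sub_self, inner_zero_right]
      calc ‖x‖ ^ 2 = ‖p x + (x - p x)‖ ^ 2 := by rw [add_sub_cancel]
        _ = ‖p x‖ ^ 2 + ‖x - p x‖ ^ 2 := by
            simp only [pow_two]
            exact norm_add_sq_eq_norm_sq_add_norm_sq_of_inner_eq_zero _ _ hinner2
    exact ⟨by rw [h1, h2], h4, h3⟩
  -- the CLM of the sum
  have hsum : T (U * Vᴴ + W) = f + g := by rw [map_add]
  set M : ℝ := max 1 ‖g‖ with hM
  have hM1 : (1 : ℝ) ≤ M := le_max_left _ _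
  have hMg : ‖g‖ ≤ M := le_max_right _ _
  have hM0 : (0 : ℝ) ≤ M := le_trans zero_le_one hM1
  -- upper bound
  have hub : ‖f + g‖ ≤ M := by
    refine ContinuousLinearMap.opNorm_le_bound _ hM0 fun x => ?_
    obtain ⟨k1, k2, k3⟩ := key x
    rw [k3] at k1
    have hle : ‖g (x - p x)‖ ≤ ‖g‖ * ‖x - p x‖ := g.le_opNorm _
    have hsq : ‖(f + g) x‖ ^ 2 ≤ (M * ‖x‖) ^ 2 := by
      have c1 : ‖g (x - p x)‖ * ‖g (x - p x)‖ ≤ (‖g‖ * ‖x - p x‖) * (‖g‖ * ‖x - p x‖) :=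
        mul_self_le_mul_self (norm_nonneg _) hle
      have c2 : ‖g‖ * ‖g‖ ≤ M * M := mul_le_mul hMg hMg (norm_nonneg g) hM0
      have c3 : (1 : ℝ) ≤ M * M := by nlinarith
      nlinarith [sq_nonneg ‖x - p x‖, sq_nonneg ‖p x‖, sq_nonneg ‖x‖,
        mul_nonneg (norm_nonneg g) (norm_nonneg (x - p x)),
        mul_le_mul_of_nonneg_right c2 (sq_nonneg ‖x - p x‖)]
    exact sq_le_imp' (norm_nonneg _) (by positivity) hsq
  -- ‖g‖ is a lower bound
  have hlb2 : ‖g‖ ≤ ‖f + g‖ := by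
    refine ContinuousLinearMap.opNorm_le_bound _ (norm_nonneg _) fun x => ?_
    obtain ⟨k1, _, _⟩ := key x
    have h1 : ‖g x‖ ≤ ‖(f + g) x‖ := by
      refine sq_le_imp' (norm_nonneg _) (norm_nonneg _) ?_
      nlinarith [norm_nonneg (p x)]
    exact h1.trans ((f + g).le_opNorm x)
  -- 1 is a lower bound
  have hlb1 : (1 : ℝ) ≤ ‖f + g‖ := by
    set j0 : Fin r := ⟨0, hr⟩ with hj0
    set v : Fin m → ℂ := fun i => V i j0 with hv
    set x₀ : EuclideanSpace ℂ (Fin m) := (WithLp.equiv 2 (Fin m → ℂ)).symm v with hx0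
    have hMV : (U * Vᴴ + W) * V = U := by
      rw [Matrix.add_mul, Matrix.mul_assoc, hV, Matrix.mul_one, hWV, add_zero]
    have hmv : (U * Vᴴ + W) *ᵥ v = fun i => U i j0 := by
      funext i
      have : ((U * Vᴴ + W) * V) i j0 = U i j0 := by rw [hMV]
      simpa [Matrix.mulVec, Matrix.mul_apply, dotProduct, hv] using this
    have happ : (f + g) x₀ = (WithLp.equiv 2 (Fin m → ℂ)).symm (fun i => U i j0) := by
      rw [← hsum, hx0, hT, WithLp.equiv_symm_apply, Matrix.toEuclideanCLM_toLp, hmv]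
    have colnorm : ∀ (A : Matrix (Fin m) (Fin r) ℂ), Aᴴ * A = 1 →
        ‖(WithLp.equiv 2 (Fin m → ℂ)).symm (fun i => A i j0)‖ = 1 := by
      intro A hA
      have h := congrFun (congrFun hA j0) j0
      simp only [Matrix.mul_apply, Matrix.conjTranspose_apply, Matrix.one_apply_eq] at h
      have hre : ∑ i, ‖A i j0‖ ^ 2 = 1 := by
        have h2 := congrArg Complex.re h
        rw [Complex.re_sum] at h2
        simpa [← Complex.normSq_eq_norm_sq, Complex.normSq_eq_conj_mul_self, Complex.normSq_apply] using h2
      rw [EuclideanSpace.norm_eq]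
      simp only [WithLp.equiv_symm_apply, WithLp.ofLp_toLp]
      rw [hre, Real.sqrt_one]
    have hxnorm : ‖x₀‖ = 1 := colnorm V hV
    have hynorm : ‖(f + g) x₀‖ = 1 := by rw [happ]; exact colnorm U hU
    have := (f + g).le_opNorm x₀
    rw [hynorm, hxnorm, mul_one] at this
    exact this
  have hnorm : ‖f + g‖ = M := le_antisymm hub (max_le hlb1 hlb2)
  have hspec : specNorm (U * Vᴴ + W) = ‖f + g‖ := by
    rw [specNorm, ← hT, hsum]
  have hspecW : specNorm W = ‖g‖ := rfl
  constructor
  · rw [hspec, hnorm, hspecW]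
  · intro hW1
    rw [hspec, hnorm, hM, hspecW] at *
    rw [hspec, hnorm]
    exact max_eq_left (hspecW ▸ hW1)
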